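/- Let m ∈ ℕ with m ≥ 1 and let r be an integer with 1 ≤ r ≤ m. Then Σ_{j=r}^{m} (−1)^j · binomial(m, j) · (j−1)!/(j−r)! = (−1)^r · (r−1)!. -/

import Mathlib

open Finset

lemma lemA (m s : ℕ) (hs : s < m) :
    ∑ k ∈ Finset.range (m + 1), (-1 : ℤ) ^ k * (Nat.choose m k) * (Nat.choose k s) = 0 := by
  rw [Finset.range_eq_Ico, ← Finset.sum_Ico_consecutive _ (Nat.zero_le s) (by omega : s ≤ m + 1)]
  have h1 : ∑ k ∈ Finset.Ico 0 s, (-1:ℤ)^k * (Nat.choose m k) * (Nat.choose k s) = 0 :=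
    Finset.sum_eq_zero fun k hk => by
      simp only [Finset.mem_Ico] at hk
      rw [Nat.choose_eq_zero_of_lt (show k < s by omega)]; push_cast; ring
  rw [h1, zero_add, Finset.sum_Ico_eq_sum_range]
  have h2 : ∀ i ∈ Finset.range (m + 1 - s),
      (-1:ℤ)^(s+i) * (Nat.choose m (s+i)) * (Nat.choose (s+i) s)
        = ((Nat.choose m s : ℤ) * (-1)^s) * ((-1)^i * (Nat.choose (m-s) i)) := by
    intro i hi
    simp only [Finset.mem_range] at hi
    have h := Nat.choose_mul (n := m) (Nat.le_add_right s i)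
    rw [Nat.add_sub_cancel_left] at h
    have h' : ((Nat.choose m (s+i) : ℤ)) * (Nat.choose (s+i) s)
        = (Nat.choose m s : ℤ) * (Nat.choose (m-s) i) := by exact_mod_cast h
    rw [pow_add, mul_assoc ((-1:ℤ)^s * (-1)^i), h']
    ring
  rw [Finset.sum_congr rfl h2, ← Finset.mul_sum,
    show m + 1 - s = (m - s) + 1 by omega,
    Int.alternating_sum_range_choose_of_ne (by omega), mul_zero]

lemma lemB (r : ℕ) (hr : 1 ≤ r) : ∀ m, r ≤ m →
    ∑ j ∈ Finset.Icc r m, (-1 : ℤ) ^ j * (Nat.choose m j) * (Nat.choose (j - 1) (r - 1))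
      = (-1 : ℤ) ^ r := by
  intro m hm
  induction m, hm using Nat.le_induction with
  | base =>
    rw [Finset.Icc_self, Finset.sum_singleton, Nat.choose_self, Nat.choose_self]
    push_cast; ring
  | succ m hm ih =>
    have pascal : ∀ j ∈ Finset.Icc r (m+1),
        (-1:ℤ)^j * (Nat.choose (m+1) j) * (Nat.choose (j-1) (r-1))
          = (-1:ℤ)^j * (Nat.choose m j) * (Nat.choose (j-1) (r-1))
            + (-1:ℤ)^j * (Nat.choose m (j-1)) * (Nat.choose (j-1) (r-1)) := by
      intro j hj
      simp only [Finset.mem_Icc] at hj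
      obtain ⟨i, rfl⟩ : ∃ i, j = i + 1 := ⟨j - 1, by omega⟩
      rw [Nat.choose_succ_succ, Nat.add_sub_cancel]
      push_cast; ring
    rw [Finset.sum_congr rfl pascal, Finset.sum_add_distrib]
    have hS1 : ∑ j ∈ Finset.Icc r (m+1),
        (-1:ℤ)^j * (Nat.choose m j) * (Nat.choose (j-1) (r-1)) = (-1:ℤ)^r := by
      rw [Finset.sum_Icc_succ_top (by omega : r ≤ m + 1), ih,
        Nat.choose_succ_self]
      push_cast; ring
    have hS2 : ∑ j ∈ Finset.Icc r (m+1),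
        (-1:ℤ)^j * (Nat.choose m (j-1)) * (Nat.choose (j-1) (r-1)) = 0 := by
      have hmap : Finset.Icc r (m+1)
          = Finset.map ⟨fun k => k + 1, add_left_injective 1⟩ (Finset.Icc (r-1) m) := by
        ext x
        simp only [Finset.mem_map, Finset.mem_Icc, Function.Embedding.coeFn_mk]
        constructor
        · intro hx; exact ⟨x - 1, by omega, show x - 1 + 1 = x by omega⟩
        · rintro ⟨k, hk, hk2⟩; omega
      rw [hmap, Finset.sum_map]
      simp only [Function.Embedding.coeFn_mk, Nat.add_sub_cancel]
      have h3 : ∀ k ∈ Finset.Icc (r-1) m,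
          (-1:ℤ)^(k+1) * (Nat.choose m k) * (Nat.choose k (r-1))
            = -((-1:ℤ)^k * (Nat.choose m k) * (Nat.choose k (r-1))) := by
        intro k _; ring
      rw [Finset.sum_congr rfl h3, Finset.sum_neg_distrib]
      have h4 : ∑ k ∈ Finset.Icc (r-1) m,
          (-1:ℤ)^k * (Nat.choose m k) * (Nat.choose k (r-1)) = 0 := by
        have hext : ∑ k ∈ Finset.range (m+1),
            (-1:ℤ)^k * (Nat.choose m k) * (Nat.choose k (r-1))
              = ∑ k ∈ Finset.Icc (r-1) m,
                  (-1:ℤ)^k * (Nat.choose m k) * (Nat.choose k (r-1)) := by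
          rw [show Finset.Icc (r-1) m = Finset.Ico (r-1) (m+1) by
            ext x; simp [Finset.mem_Icc, Finset.mem_Ico],
            Finset.range_eq_Ico,
            ← Finset.sum_Ico_consecutive _ (Nat.zero_le (r-1)) (by omega : r - 1 ≤ m + 1)]
          have : ∑ k ∈ Finset.Ico 0 (r-1),
              (-1:ℤ)^k * (Nat.choose m k) * (Nat.choose k (r-1)) = 0 :=
            Finset.sum_eq_zero fun k hk => by
              simp only [Finset.mem_Ico] at hk
              rw [Nat.choose_eq_zero_of_lt (show k < r - 1 by omega)]; push_cast; ring
          rw [this, zero_add]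
        rw [← hext, lemA m (r-1) (by omega)]
      rw [h4, neg_zero]
    rw [hS1, hS2, add_zero]

theorem stmt_14 (m r : ℕ) (hm : 1 ≤ m) (hr : 1 ≤ r) (hrm : r ≤ m) :
    ∑ j ∈ Finset.Icc r m,
        (-1 : ℝ) ^ j * (Nat.choose m j : ℝ) *
          ((Nat.factorial (j - 1) : ℝ) / (Nat.factorial (j - r) : ℝ)) =
      (-1 : ℝ) ^ r * (Nat.factorial (r - 1) : ℝ) := by
  have key : ∀ j ∈ Finset.Icc r m,
      (-1:ℝ)^j * (Nat.choose m j : ℝ) *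
          ((Nat.factorial (j - 1) : ℝ) / (Nat.factorial (j - r) : ℝ)) =
        (Nat.factorial (r-1) : ℝ) *
          ((-1:ℝ)^j * (Nat.choose m j : ℝ) * (Nat.choose (j-1) (r-1) : ℝ)) := by
    intro j hj
    simp only [Finset.mem_Icc] at hj
    have h := Nat.choose_mul_factorial_mul_factorial (show r - 1 ≤ j - 1 by omega)
    rw [show j - 1 - (r-1) = j - r by omega] at h
    have h2 : ((Nat.factorial (j-1)) : ℝ)
        = (Nat.choose (j-1) (r-1) : ℝ) * (Nat.factorial (r-1)) * (Nat.factorial (j-r)) := by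
      exact_mod_cast h.symm
    have h3 : ((Nat.factorial (j-r)) : ℝ) ≠ 0 := by
      exact_mod_cast Nat.factorial_ne_zero (j-r)
    rw [h2]
    field_simp
  rw [Finset.sum_congr rfl key, ← Finset.mul_sum]
  have hB := lemB r hr m hrm
  have hBR := congrArg (fun z : ℤ => (z : ℝ)) hB
  push_cast at hBR
  rw [hBR]
  ring
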